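/- Let f be holomorphic near z ∈ ℂ with f′(z) ≠ 0 and set N_z(t) = f′(z)(t − f(z)) / ((1/2)f″(z)(t − f(z)) + f′(z)²). Then for every fixed t ∈ ℂ for which the denominator (1/2)f″(z)(t − f(z)) + f′(z)² is nonzero, the partial derivative of N_z(t) with respect to z satisfies ∂_z N_z(t) = −1 − (1/2) S_f(z) N_z(t)², where S_f = f‴/f′ − (3/2)(f″/f′)² is the classical Schwarzian derivative of f. -/

import Mathlib

/-- The Möbius map `N_z(t) = f'(z)(t - f(z)) / ((1/2) f''(z)(t - f(z)) + f'(z)^2)`. -/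
noncomputable def tamanoiN (f : ℂ → ℂ) (z t : ℂ) : ℂ :=
  deriv f z * (t - f z) /
    ((1 / 2) * iteratedDeriv 2 f z * (t - f z) + (deriv f z) ^ 2)

/-- The classical Schwarzian derivative `S_f = f'''/f' - (3/2)(f''/f')^2`. -/
noncomputable def schwarzianDeriv (f : ℂ → ℂ) (z : ℂ) : ℂ :=
  iteratedDeriv 3 f z / deriv f z - (3 / 2) * (iteratedDeriv 2 f z / deriv f z) ^ 2

private lemma analyticAt_deriv {f : ℂ → ℂ} {z : ℂ} (hf : AnalyticAt ℂ f z) :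
    AnalyticAt ℂ (deriv f) z := by
  have h : AnalyticAt ℂ (fun w => fderiv ℂ f w 1) z :=
    ((ContinuousLinearMap.apply ℂ ℂ (1 : ℂ)).analyticAt _).comp hf.fderiv
  exact h

/-- `∂_z N_z(t) = -1 - (1/2) S_f(z) N_z(t)^2`. -/
theorem deriv_tamanoiN (f : ℂ → ℂ) (z t : ℂ) (hf : AnalyticAt ℂ f z)
    (hf' : deriv f z ≠ 0)
    (hden : (1 / 2) * iteratedDeriv 2 f z * (t - f z) + (deriv f z) ^ 2 ≠ 0) :
    deriv (fun ζ => tamanoiN f ζ t) z =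
      -1 - (1 / 2) * schwarzianDeriv f z * (tamanoiN f z t) ^ 2 := by
  have h1 : AnalyticAt ℂ (deriv f) z := analyticAt_deriv hf
  have h2 : AnalyticAt ℂ (deriv (deriv f)) z := analyticAt_deriv h1
  have e2 : iteratedDeriv 2 f = deriv (deriv f) := by
    simp [iteratedDeriv_succ, iteratedDeriv_one]
  have e3 : iteratedDeriv 3 f = deriv (deriv (deriv f)) := by
    simp [iteratedDeriv_succ, iteratedDeriv_one]
  set a := deriv f z with ha
  set b := iteratedDeriv 2 f z with hb
  set c := iteratedDeriv 3 f z with hc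
  have hDf : HasDerivAt f a z := hf.differentiableAt.hasDerivAt
  have hDf' : HasDerivAt (deriv f) b z := by
    rw [hb, e2]; exact h1.differentiableAt.hasDerivAt
  have hDf'' : HasDerivAt (iteratedDeriv 2 f) c z := by
    rw [hc, e3, e2]; exact h2.differentiableAt.hasDerivAt
  have hnum : HasDerivAt (fun ζ => deriv f ζ * (t - f ζ))
      (b * (t - f z) + deriv f z * (0 - a)) z :=
    hDf'.mul ((hasDerivAt_const z t).sub hDf)
  have hd : HasDerivAt
      (fun ζ => (1 / 2) * iteratedDeriv 2 f ζ * (t - f ζ) + (deriv f ζ) ^ 2)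
      ((0 * iteratedDeriv 2 f z + 1 / 2 * c) * (t - f z) +
        1 / 2 * iteratedDeriv 2 f z * (0 - a) + 2 * deriv f z ^ (2 - 1) * b) z :=
    (((hasDerivAt_const z ((1 : ℂ) / 2)).mul hDf'').mul
      ((hasDerivAt_const z t).sub hDf)).add (hDf'.pow 2)
  have hN : HasDerivAt (fun ζ => deriv f ζ * (t - f ζ) /
      ((1 / 2) * iteratedDeriv 2 f ζ * (t - f ζ) + (deriv f ζ) ^ 2)) _ z := hnum.div hd hden
  have hfun : (fun ζ => tamanoiN f ζ t) = fun ζ =>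
      deriv f ζ * (t - f ζ) /
        ((1 / 2) * iteratedDeriv 2 f ζ * (t - f ζ) + (deriv f ζ) ^ 2) := rfl
  rw [hfun, hN.deriv, tamanoiN, schwarzianDeriv, ← ha, ← hb, ← hc]
  set w := t - f z with hw
  clear_value a b c w
  have hx : ((1 : ℂ) / 2 * b * w + a ^ 2) ^ 2 ≠ 0 := pow_ne_zero 2 hden
  rw [div_eq_iff hx]
  have k2 : b * w * a ^ 5 * 16 + b ^ 2 * w ^ 2 * a ^ 3 * 4 + a ^ 7 * 16 ≠ 0 := by
    have h : b * w * a ^ 5 * 16 + b ^ 2 * w ^ 2 * a ^ 3 * 4 + a ^ 7 * 16 =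
        16 * a ^ 3 * ((1 / 2 * b * w + a ^ 2) ^ 2) := by ring
    rw [h]
    exact mul_ne_zero (mul_ne_zero (by norm_num) (pow_ne_zero 3 hf')) hx
  field_simp [hf', hden, k2]
  have hbw : b * w + a ^ 2 * 2 ≠ 0 := by
    have h : b * w + a ^ 2 * 2 = 2 * (1 / 2 * b * w + a ^ 2) := by ring
    rw [h]; exact mul_ne_zero two_ne_zero hden
  have k3 : (2 : ℂ) * (a * (2 * a ^ 2)) * (b * w + a ^ 2 * 2) ^ 2 ≠ 0 :=
    mul_ne_zero (mul_ne_zero two_ne_zero (mul_ne_zero hf'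
      (mul_ne_zero two_ne_zero (pow_ne_zero 2 hf')))) (pow_ne_zero 2 hbw)
  field_simp [k3]
  have k4 : (b * w + 2 * a ^ 2) ^ 2 ≠ 0 := by
    have h : b * w + 2 * a ^ 2 = b * w + a ^ 2 * 2 := by ring
    rw [h]; exact pow_ne_zero 2 hbw
  rw [mul_sub ((b * w + 2 * a ^ 2) ^ 2), mul_div_cancel₀ _ k4]
  ring
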